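/- (Theorem 1, linear-algebraic core.) Let W be a symmetric 2d × 2d real matrix, c_0 ≥ 0, and 𝛍_t a unit vector with W𝛍_t = c_0 𝛍_t. Assume ‖W v‖ ≤ c_0 ‖v‖ for all v ∈ ℝ^{2d}. Then for every unit vector 𝛍 with 𝛍_tᵀ𝛍 > 0 and all scalars α ≥ 0, β ≥ 0 with α𝛍 + βW𝛍 ≠ 0, the updated mean 𝛍' = (α𝛍 + βW𝛍)/‖α𝛍 + βW𝛍‖ satisfies 𝛍_tᵀ𝛍' ≥ 𝛍_tᵀ𝛍; that is, the overlap of the new mean vector with the true vector is at least that of the current mean vector. -/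

import Mathlib

open Matrix Finset

/-- Theorem 1, linear-algebraic core: Let W be a symmetric 2d × 2d real
matrix, c_0 ≥ 0, 𝛍_t a unit vector with W𝛍_t = c_0 𝛍_t, and ‖Wv‖ ≤ c_0‖v‖ for all v
(Euclidean norms). Then for every unit vector 𝛍 with 𝛍_tᵀ𝛍 > 0 and all α, β ≥ 0 with
α𝛍 + βW𝛍 ≠ 0, the updated mean 𝛍' = (α𝛍 + βW𝛍)/‖α𝛍 + βW𝛍‖ satisfies 𝛍_tᵀ𝛍' ≥ 𝛍_tᵀ𝛍. -/
theorem stmt8 {d : ℕ} (W : Matrix (Fin (2 * d)) (Fin (2 * d)) ℝ) (hW : W.IsSymm)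
    (c0 : ℝ) (hc0 : 0 ≤ c0)
    (μt : Fin (2 * d) → ℝ) (hμt : ∑ i, μt i ^ 2 = 1) (hEig : W *ᵥ μt = c0 • μt)
    (hbound : ∀ v : Fin (2 * d) → ℝ,
      Real.sqrt (∑ i, (W *ᵥ v) i ^ 2) ≤ c0 * Real.sqrt (∑ i, v i ^ 2))
    (μ : Fin (2 * d) → ℝ) (hμ : ∑ i, μ i ^ 2 = 1) (hov : 0 < μt ⬝ᵥ μ)
    (α β : ℝ) (hα : 0 ≤ α) (hβ : 0 ≤ β)
    (hne : α • μ + β • (W *ᵥ μ) ≠ 0) :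
    μt ⬝ᵥ (Real.sqrt (∑ i, (α • μ + β • (W *ᵥ μ)) i ^ 2))⁻¹ • (α • μ + β • (W *ᵥ μ))
      ≥ μt ⬝ᵥ μ := by
  set v : Fin (2 * d) → ℝ := α • μ + β • (W *ᵥ μ) with hv
  -- norm as euclidean norm
  have keynorm : ∀ w : Fin (2 * d) → ℝ,
      Real.sqrt (∑ i, w i ^ 2) = ‖(WithLp.equiv 2 (Fin (2 * d) → ℝ)).symm w‖ := by
    intro w
    rw [EuclideanSpace.norm_eq]
    congr 1
    refine Finset.sum_congr rfl fun i _ => ?_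
    simp [PiLp.toLp_apply, Real.norm_eq_abs, sq_abs]
  -- dot product identity
  have hdot : μt ⬝ᵥ v = (α + β * c0) * (μt ⬝ᵥ μ) := by
    have hsym : μt ⬝ᵥ (W *ᵥ μ) = c0 * (μt ⬝ᵥ μ) := by
      rw [Matrix.dotProduct_mulVec, ← Matrix.mulVec_transpose, hW.eq, hEig]
      simp [smul_dotProduct, smul_eq_mul]
    simp [hv, dotProduct_add, dotProduct_smul, hsym, smul_eq_mul]
    ring
  -- norm bounds
  have hμnorm : Real.sqrt (∑ i, μ i ^ 2) = 1 := by rw [hμ]; exact Real.sqrt_one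
  have hWμ : Real.sqrt (∑ i, (W *ᵥ μ) i ^ 2) ≤ c0 := by
    have := hbound μ
    rwa [hμnorm, mul_one] at this
  have htri : Real.sqrt (∑ i, v i ^ 2) ≤ α + β * c0 := by
    rw [keynorm]
    have : (WithLp.equiv 2 (Fin (2 * d) → ℝ)).symm v
        = α • (WithLp.equiv 2 (Fin (2 * d) → ℝ)).symm μ
          + β • (WithLp.equiv 2 (Fin (2 * d) → ℝ)).symm (W *ᵥ μ) := rfl
    rw [this]
    calc ‖α • (WithLp.equiv 2 (Fin (2 * d) → ℝ)).symm μ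
          + β • (WithLp.equiv 2 (Fin (2 * d) → ℝ)).symm (W *ᵥ μ)‖
        ≤ ‖α • (WithLp.equiv 2 (Fin (2 * d) → ℝ)).symm μ‖
          + ‖β • (WithLp.equiv 2 (Fin (2 * d) → ℝ)).symm (W *ᵥ μ)‖ := norm_add_le _ _
      _ = α * ‖(WithLp.equiv 2 (Fin (2 * d) → ℝ)).symm μ‖
          + β * ‖(WithLp.equiv 2 (Fin (2 * d) → ℝ)).symm (W *ᵥ μ)‖ := by
            rw [norm_smul, norm_smul, Real.norm_eq_abs, Real.norm_eq_abs,
              abs_of_nonneg hα, abs_of_nonneg hβ]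
      _ ≤ α * 1 + β * c0 := by
            gcongr
            · rw [← keynorm]; exact le_of_eq hμnorm
            · rw [← keynorm]; exact hWμ
      _ = α + β * c0 := by ring
  have hNpos : 0 < Real.sqrt (∑ i, v i ^ 2) := by
    rw [keynorm]
    refine norm_pos_iff.mpr ?_
    intro h
    exact hne ((WithLp.equiv 2 (Fin (2 * d) → ℝ)).symm.injective (by simpa using h))
  rw [dotProduct_smul, smul_eq_mul, hdot, ge_iff_le]
  have h1 : (1:ℝ) ≤ (Real.sqrt (∑ i, v i ^ 2))⁻¹ * (α + β * c0) := by
    rw [← div_eq_inv_mul, le_div_iff₀ hNpos, one_mul]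
    exact htri
  calc μt ⬝ᵥ μ = 1 * (μt ⬝ᵥ μ) := (one_mul _).symm
    _ ≤ ((Real.sqrt (∑ i, v i ^ 2))⁻¹ * (α + β * c0)) * (μt ⬝ᵥ μ) :=
        mul_le_mul_of_nonneg_right h1 hov.le
    _ = (Real.sqrt (∑ i, v i ^ 2))⁻¹ * ((α + β * c0) * (μt ⬝ᵥ μ)) := by ring
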